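/- arXiv:1612.08299 — 4 statements merged into one kernel-verified Lean document; each statement's English description precedes it below -/
import Mathlib

section
/- Let R > r > 0 be real numbers. Define the curve γ : ℝ → ℝ³ by γ(t) = (√(R² − r²)·cos t, r + R·sin t, r·cos t). Then for every t: (i) γ(t) lies on the torus T = {(x, y, z) ∈ ℝ³ : (√(x² + y²) − R)² + z² = r²}; (ii) γ(t) lies in the plane P = {(x, y, z) ∈ ℝ³ : √(R² − r²)·z = r·x}; (iii) the distance from γ(t) to the point (0, r, 0) equals R. Hence γ traces a circle of radius R (a Villarceau circle) lying on the torus T. -/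
open Real

/-- The point `(x, y, z)` of Euclidean 3-space. -/
noncomputable def pt (x y z : ℝ) : EuclideanSpace ℝ (Fin 3) :=
  (WithLp.equiv 2 (Fin 3 → ℝ)).symm ![x, y, z]

/-- The torus of revolution with major radius `R` and minor radius `r`:
`T = {(x, y, z) : (√(x² + y²) − R)² + z² = r²}`. -/
def torus (R r : ℝ) : Set (EuclideanSpace ℝ (Fin 3)) :=
  {p | (Real.sqrt ((p 0) ^ 2 + (p 1) ^ 2) - R) ^ 2 + (p 2) ^ 2 = r ^ 2}

/-- The bitangent plane `P = {(x, y, z) : √(R² − r²)·z = r·x}`. -/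
def bitangentPlane (R r : ℝ) : Set (EuclideanSpace ℝ (Fin 3)) :=
  {p | Real.sqrt (R ^ 2 - r ^ 2) * p 2 = r * p 0}

/-- The Villarceau circle `γ(t) = (√(R² − r²)·cos t, r + R·sin t, r·cos t)`. -/
noncomputable def villarceau (R r : ℝ) (t : ℝ) : EuclideanSpace ℝ (Fin 3) :=
  pt (Real.sqrt (R ^ 2 - r ^ 2) * Real.cos t) (r + R * Real.sin t) (r * Real.cos t)

/-- For `R > r > 0`, every point `γ(t)` of the Villarceau curve lies on the torus `T`,
lies in the bitangent plane `P`, and is at distance `R` from the point `(0, r, 0)`;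
hence `γ` traces a circle of radius `R` lying on the torus. -/
theorem villarceau_on_torus_in_plane_circle (R r : ℝ) (hr : 0 < r) (hR : r < R) (t : ℝ) :
    villarceau R r t ∈ torus R r ∧
    villarceau R r t ∈ bitangentPlane R r ∧
    dist (villarceau R r t) (pt 0 r 0) = R := by
  have hRr : (0:ℝ) ≤ R ^ 2 - r ^ 2 := by nlinarith
  have hs : Real.sqrt (R ^ 2 - r ^ 2) ^ 2 = R ^ 2 - r ^ 2 := Real.sq_sqrt hRr
  have hsc : Real.sin t ^ 2 + Real.cos t ^ 2 = 1 := Real.sin_sq_add_cos_sq t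
  have hsin : -1 ≤ Real.sin t := Real.neg_one_le_sin t
  have h0 : villarceau R r t 0 = Real.sqrt (R ^ 2 - r ^ 2) * Real.cos t := rfl
  have h1 : villarceau R r t 1 = r + R * Real.sin t := rfl
  have h2 : villarceau R r t 2 = r * Real.cos t := rfl
  have hpos : 0 ≤ R + r * Real.sin t := by nlinarith
  have hsum : (villarceau R r t 0) ^ 2 + (villarceau R r t 1) ^ 2
      = (R + r * Real.sin t) ^ 2 := by
    rw [h0, h1]; nlinarith [hs, hsc]
  have hsqrt : Real.sqrt ((villarceau R r t 0) ^ 2 + (villarceau R r t 1) ^ 2)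
      = R + r * Real.sin t := by
    rw [hsum, Real.sqrt_sq hpos]
  refine ⟨?_, ?_, ?_⟩
  · show (Real.sqrt _ - R) ^ 2 + _ = r ^ 2
    rw [hsqrt, h2]; nlinarith [hsc]
  · show Real.sqrt (R ^ 2 - r ^ 2) * villarceau R r t 2 = r * villarceau R r t 0
    rw [h0, h2]; ring
  · have hd : dist (villarceau R r t) (pt 0 r 0)
        = Real.sqrt (∑ i, dist (villarceau R r t i) (pt 0 r 0 i) ^ 2) :=
      EuclideanSpace.dist_eq _ _
    have hp0 : pt 0 r 0 0 = (0:ℝ) := rfl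
    have hp1 : pt 0 r 0 1 = r := rfl
    have hp2 : pt 0 r 0 2 = (0:ℝ) := rfl
    rw [hd, Fin.sum_univ_three, hp0, hp1, hp2, h0, h1, h2,
      Real.dist_eq, Real.dist_eq, Real.dist_eq]
    rw [show |Real.sqrt (R ^ 2 - r ^ 2) * Real.cos t - 0| ^ 2
        + |r + R * Real.sin t - r| ^ 2 + |r * Real.cos t - 0| ^ 2 = R ^ 2 by
      rw [sq_abs, sq_abs, sq_abs]; nlinarith [hs, hsc]]
    exact Real.sqrt_sq (by linarith)
end

section
/- Let R > r > 0. Let T = {(x, y, z) ∈ ℝ³ : (√(x² + y²) − R)² + z² = r²} and P = {(x, y, z) ∈ ℝ³ : √(R² − r²)·z = r·x}. Then the intersection T ∩ P equals C₊ ∪ C₋, where C₊ = {p ∈ P : ‖p − (0, r, 0)‖ = R} and C₋ = {p ∈ P : ‖p − (0, −r, 0)‖ = R}. That is, the bitangent plane cuts the torus in exactly two circles of radius R, the Villarceau circles. -/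
open Real

lemma aux_sq_eq (a b : ℝ) (ha : 0 ≤ a) (hb : 0 ≤ b) (h : a^2 = b^2) : a = b := by
  nlinarith [sq_nonneg (a - b), sq_nonneg (a + b)]

/-- For `R > r > 0`, the bitangent plane cuts the torus in exactly the union of the two
Villarceau circles: `T ∩ P = C₊ ∪ C₋`, where `C₊` (resp. `C₋`) is the set of points of `P`
at distance `R` from `(0, r, 0)` (resp. from `(0, −r, 0)`). -/
theorem torus_inter_bitangent_eq_villarceau_circles (R r : ℝ) (hr : 0 < r) (hR : r < R) :
    torus R r ∩ bitangentPlane R r =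
      {p | p ∈ bitangentPlane R r ∧ dist p (pt 0 r 0) = R} ∪
      {p | p ∈ bitangentPlane R r ∧ dist p (pt 0 (-r) 0) = R} := by
  have hR0 : (0:ℝ) < R := hr.trans hR
  ext p
  set x := p 0 with hx
  set y := p 1 with hy
  set z := p 2 with hz
  have hdist : ∀ a : ℝ, dist p (pt 0 a 0) = Real.sqrt (x^2 + (y - a)^2 + z^2) := by
    intro a
    rw [EuclideanSpace.dist_eq, Fin.sum_univ_three]
    simp [pt, Real.dist_eq, sq_abs, ← hx, ← hy, ← hz]
  have hdist' : ∀ a : ℝ, dist p (pt 0 a 0) = R ↔ x^2 + (y - a)^2 + z^2 = R^2 := by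
    intro a
    rw [hdist a, show R = Real.sqrt (R^2) from (Real.sqrt_sq hR0.le).symm,
      Real.sqrt_inj (by positivity) (by positivity)]
    rw [Real.sqrt_sq hR0.le]
  have hs : Real.sqrt (R^2 - r^2) ^ 2 = R^2 - r^2 := Real.sq_sqrt (by nlinarith)
  set u := Real.sqrt (x^2 + y^2) with hudef
  have hu : u^2 = x^2 + y^2 := Real.sq_sqrt (by positivity)
  have hu0 : 0 ≤ u := Real.sqrt_nonneg _
  simp only [Set.mem_inter_iff, Set.mem_union, Set.mem_setOf_eq, torus, bitangentPlane,
    ← hx, ← hy, ← hz, ← hudef, hdist' r, hdist' (-r)]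
  have plane_sq : Real.sqrt (R^2 - r^2) * z = r * x → (R^2 - r^2) * z^2 = r^2 * x^2 := by
    intro hp
    have h2 : (Real.sqrt (R^2 - r^2))^2 * z^2 = r^2 * x^2 := by
      have := congrArg (· ^ 2) hp
      simp only [mul_pow] at this
      linarith [this]
    linear_combination h2 - z^2 * hs
  constructor
  · rintro ⟨ht, hp⟩
    have h1 := plane_sq hp
    have h2R : 2 * R * u = x^2 + y^2 + z^2 + (R^2 - r^2) := by linear_combination hu - ht
    have hquad : (x^2 + y^2 + z^2 - (R^2 - r^2) - 2*r*y) *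
        (x^2 + y^2 + z^2 - (R^2 - r^2) + 2*r*y) = 0 := by
      linear_combination (-(2*R*u + (x^2+y^2+z^2) + (R^2-r^2))) * h2R + 4*R^2*hu - 4*h1
    rcases mul_eq_zero.1 hquad with h | h
    · exact Or.inl ⟨hp, by linear_combination h⟩
    · exact Or.inr ⟨hp, by linear_combination h⟩
  · have key : Real.sqrt (R^2 - r^2) * z = r * x →
        (x^2 + y^2 + z^2 + (R^2 - r^2))^2 = 4 * R^2 * (x^2 + y^2) →
        ((u - R)^2 + z^2 = r^2 ∧ Real.sqrt (R^2 - r^2) * z = r * x) := by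
      intro hp hsq
      refine ⟨?_, hp⟩
      have hA : 0 ≤ x^2 + y^2 + z^2 + (R^2 - r^2) := by nlinarith [sq_nonneg x, sq_nonneg y, sq_nonneg z]
      have h2R : 2 * R * u = x^2 + y^2 + z^2 + (R^2 - r^2) := by
        refine aux_sq_eq _ _ (by positivity) hA ?_
        linear_combination 4*R^2*hu - hsq
      linear_combination hu - h2R
    rintro (⟨hp, hc⟩ | ⟨hp, hc⟩)
    · refine key hp ?_
      have h1 := plane_sq hp
      linear_combination (x^2+y^2+z^2-(R^2-r^2)+2*r*y) * hc + 4*h1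
    · refine key hp ?_
      have h1 := plane_sq hp
      linear_combination (x^2+y^2+z^2-(R^2-r^2)-2*r*y) * hc + 4*h1
end

section
/- Let R > r > 0 and let γ(t) = (√(R² − r²)·cos t, r + R·sin t, r·cos t) be the Villarceau circle on the torus T with radii R, r. For a point (x, y, z) ∈ ℝ³ let ℓ(x, y, z) = (−y, x, 0) denote the tangent direction of the horizontal (latitude) circle through that point. Then for every t, the inner product ⟨γ'(t), ℓ(γ(t))⟩ divided by ‖γ'(t)‖·‖ℓ(γ(t))‖ equals √(R² − r²)/R. In particular the Villarceau circle meets every latitude circle of the torus at the same constant angle. -/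
open Real

open RealInnerProductSpace

/-- The tangent direction `(−y, x, 0)` of the horizontal (latitude) circle through `(x, y, z)`. -/
noncomputable def latitudeTangent (p : EuclideanSpace ℝ (Fin 3)) : EuclideanSpace ℝ (Fin 3) :=
  pt (-(p 1)) (p 0) 0

lemma hasDerivAt_villarceau (R r t : ℝ) :
    HasDerivAt (villarceau R r)
      (pt (-(Real.sqrt (R ^ 2 - r ^ 2) * Real.sin t)) (R * Real.cos t) (-(r * Real.sin t))) t := by
  set s := Real.sqrt (R ^ 2 - r ^ 2)
  have hf : HasDerivAt (fun t : ℝ => (![s * Real.cos t, r + R * Real.sin t, r * Real.cos t] : Fin 3 → ℝ))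
      ![-(s * Real.sin t), R * Real.cos t, -(r * Real.sin t)] t := by
    rw [hasDerivAt_pi]
    intro i
    fin_cases i <;> simp
    · simpa using (Real.hasDerivAt_cos t).const_mul s
    · simpa using ((Real.hasDerivAt_sin t).const_mul R).const_add r
    · simpa using (Real.hasDerivAt_cos t).const_mul r
  exact ((PiLp.continuousLinearEquiv 2 ℝ
    (fun _ : Fin 3 => ℝ)).symm.toContinuousLinearMap.hasFDerivAt).comp_hasDerivAt t hf

lemma inner_pt (a b c d e f : ℝ) : ⟪pt a b c, pt d e f⟫ = a * d + b * e + c * f := by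
  simp [pt, PiLp.inner_apply, Fin.sum_univ_three]
  ring

lemma norm_pt (a b c : ℝ) : ‖pt a b c‖ = Real.sqrt (a ^ 2 + b ^ 2 + c ^ 2) := by
  rw [EuclideanSpace.norm_eq]
  simp [pt, Fin.sum_univ_three, sq_abs, add_assoc]

/-- For `R > r > 0`, the Villarceau circle meets every latitude circle of the torus at the
same constant angle: for every `t`, the cosine of the angle between `γ'(t)` and the latitude
tangent direction at `γ(t)` equals `√(R² − r²)/R`. -/
theorem villarceau_latitude_angle (R r : ℝ) (hr : 0 < r) (hR : r < R) (t : ℝ) :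
    ⟪deriv (villarceau R r) t, latitudeTangent (villarceau R r t)⟫ /
        (‖deriv (villarceau R r) t‖ * ‖latitudeTangent (villarceau R r t)‖) =
      Real.sqrt (R ^ 2 - r ^ 2) / R := by
  have hd := (hasDerivAt_villarceau R r t).deriv
  set s := Real.sqrt (R ^ 2 - r ^ 2) with hs
  have hs2 : s ^ 2 = R ^ 2 - r ^ 2 := Real.sq_sqrt (by nlinarith)
  have h0 : villarceau R r t 0 = s * Real.cos t := rfl
  have h1 : villarceau R r t 1 = r + R * Real.sin t := rfl
  have hpos : 0 < R + r * Real.sin t := by nlinarith [neg_one_le_sin t]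
  have hRpos : (0:ℝ) < R := hr.trans hR
  rw [latitudeTangent, hd, h0, h1, inner_pt, norm_pt, norm_pt]
  have hn1 : Real.sqrt ((-(s * Real.sin t)) ^ 2 + (R * Real.cos t) ^ 2 + (-(r * Real.sin t)) ^ 2) = R := by
    rw [show (-(s * Real.sin t)) ^ 2 + (R * Real.cos t) ^ 2 + (-(r * Real.sin t)) ^ 2 = R ^ 2 by
      have := Real.sin_sq_add_cos_sq t; nlinarith]
    exact Real.sqrt_sq hRpos.le
  have hn2 : Real.sqrt ((-(r + R * Real.sin t)) ^ 2 + (s * Real.cos t) ^ 2 + 0 ^ 2)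
      = R + r * Real.sin t := by
    rw [show (-(r + R * Real.sin t)) ^ 2 + (s * Real.cos t) ^ 2 + (0:ℝ) ^ 2 = (R + r * Real.sin t) ^ 2 by
      have := Real.sin_sq_add_cos_sq t; nlinarith]
    exact Real.sqrt_sq hpos.le
  rw [hn1, hn2]
  have hnum : -(s * Real.sin t) * -(r + R * Real.sin t) + R * Real.cos t * (s * Real.cos t)
      + -(r * Real.sin t) * 0 = s * (R + r * Real.sin t) := by
    linear_combination (s * R) * Real.sin_sq_add_cos_sq t
  rw [hnum]
  field_simp
end

section
/- Define F : ℝ³ → ℝ by F(x, y, z) = 8(x⁴ + y⁴ + z⁴) − 8(x² + y² + z²) + 3. The set of singular points of the contour surface S(1) = {p : F(p) = 1}, i.e. points p with F(p) = 1 and ∇F(p) = 0, consists of exactly six points: (±1/√2, 0, 0), (0, ±1/√2, 0), and (0, 0, ±1/√2). (These are the six nodes of S(1), corresponding to the faces of a cube.) -/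
set_option maxHeartbeats 1000000

/-- The Chmutov polynomial `F(x, y, z) = 8(x⁴ + y⁴ + z⁴) − 8(x² + y² + z²) + 3`. -/
def chmutov (p : ℝ × ℝ × ℝ) : ℝ :=
  8 * (p.1 ^ 4 + p.2.1 ^ 4 + p.2.2 ^ 4) - 8 * (p.1 ^ 2 + p.2.1 ^ 2 + p.2.2 ^ 2) + 3

/-- The gradient `∇F(x, y, z) = (32x³ − 16x, 32y³ − 16y, 32z³ − 16z)` of the Chmutov
polynomial. -/
def chmutovGrad (p : ℝ × ℝ × ℝ) : ℝ × ℝ × ℝ :=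
  (32 * p.1 ^ 3 - 16 * p.1, 32 * p.2.1 ^ 3 - 16 * p.2.1, 32 * p.2.2 ^ 3 - 16 * p.2.2)

lemma sq_inv_sqrt_two : (1 / Real.sqrt 2) ^ 2 = 1 / 2 := by
  rw [div_pow, one_pow, Real.sq_sqrt (by norm_num : (0:ℝ) ≤ 2)]

lemma cube_root_cases (t : ℝ) (h : 32 * t ^ 3 - 16 * t = 0) :
    t = 0 ∨ t = 1 / Real.sqrt 2 ∨ t = -(1 / Real.sqrt 2) := by
  have h' : 16 * t * (2 * t ^ 2 - 1) = 0 := by linarith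
  rcases mul_eq_zero.mp h' with h1 | h2
  · rcases mul_eq_zero.mp h1 with h | h
    · norm_num at h
    · exact Or.inl h
  · right
    have ht : t ^ 2 = (1 / Real.sqrt 2) ^ 2 := by rw [sq_inv_sqrt_two]; linarith
    exact sq_eq_sq_iff_eq_or_eq_neg.mp ht

/-- The set of singular points of the contour surface `S(1) = {p : F(p) = 1}` of the Chmutov
polynomial consists of exactly six points: `(±1/√2, 0, 0)`, `(0, ±1/√2, 0)`, `(0, 0, ±1/√2)`
— the six nodes of `S(1)`, corresponding to the faces of a cube. -/
theorem chmutov_nodes_S1 :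
    {p : ℝ × ℝ × ℝ | chmutov p = 1 ∧ chmutovGrad p = 0} =
      ({(1 / Real.sqrt 2, 0, 0), (-(1 / Real.sqrt 2), 0, 0),
        (0, 1 / Real.sqrt 2, 0), (0, -(1 / Real.sqrt 2), 0),
        (0, 0, 1 / Real.sqrt 2), (0, 0, -(1 / Real.sqrt 2))} : Set (ℝ × ℝ × ℝ)) := by
  have hs := sq_inv_sqrt_two
  set s := 1 / Real.sqrt 2 with hsdef
  have hs4 : s ^ 4 = 1 / 4 := by nlinarith [hs]
  ext ⟨x, y, z⟩
  simp only [Set.mem_setOf_eq, chmutov, chmutovGrad, Prod.mk.injEq, Prod.ext_iff,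
    Prod.fst_zero, Prod.snd_zero, Set.mem_insert_iff, Set.mem_singleton_iff]
  constructor
  · rintro ⟨hF, hx, hy, hz⟩
    rcases cube_root_cases x hx with hx | hx | hx <;>
      rcases cube_root_cases y hy with hy | hy | hy <;>
        rcases cube_root_cases z hz with hz | hz | hz <;>
          subst hx <;> subst hy <;> subst hz <;>
            first
              | exact Or.inl ⟨rfl, rfl, rfl⟩
              | exact Or.inr (Or.inl ⟨rfl, rfl, rfl⟩)
              | exact Or.inr (Or.inr (Or.inl ⟨rfl, rfl, rfl⟩))
              | exact Or.inr (Or.inr (Or.inr (Or.inl ⟨rfl, rfl, rfl⟩)))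
              | exact Or.inr (Or.inr (Or.inr (Or.inr (Or.inl ⟨rfl, rfl, rfl⟩))))
              | exact Or.inr (Or.inr (Or.inr (Or.inr (Or.inr ⟨rfl, rfl, rfl⟩))))
              | (exfalso; nlinarith [hF, hs, hs4])
  · rintro (⟨hx, hy, hz⟩ | ⟨hx, hy, hz⟩ | ⟨hx, hy, hz⟩ | ⟨hx, hy, hz⟩ | ⟨hx, hy, hz⟩ |
      ⟨hx, hy, hz⟩) <;> subst hx <;> subst hy <;> subst hz <;>
      refine ⟨by linear_combination 8 * hs4 - 8 * hs, ?_, ?_, ?_⟩ <;>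
        first
          | linear_combination (32 * s) * hs
          | linear_combination (-(32 * s)) * hs
          | norm_num
end
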